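/- arXiv:0909.2242 — 2 statements merged into one kernel-verified Lean document; each statement's English description precedes it below -/
import Mathlib

section
/- Let λ be an A^H-regular partition, b an addable box and b' a removable box of λ of the same color with h(b) - 1 = h(b') + 1. If c is any addable box of the same color with b ≻_{A^H} c ≻_{A^H} b', then h(c) = h(b); if c is any removable box of the same color with b ≻_{A^H} c ≻_{A^H} b', then h(c) = h(b'). -/
/-- The content of a box with cell coordinates `(i, j)` (row `i`, column `j`, zero-indexed;
in the paper's half-integer coordinates the box is `(i + 1/2, j + 1/2)`). -/
def content (p : ℕ × ℕ) : ℤ := (p.2 : ℤ) - (p.1 : ℤ)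

/-- The height `h(b) = x_b + y_b` of a box (in the paper's half-integer coordinates). -/
def height (p : ℕ × ℕ) : ℤ := (p.1 : ℤ) + (p.2 : ℤ) + 1

/-- A box is addable if adding it yields a Young diagram. -/
def IsAddable (μ : YoungDiagram) (p : ℕ × ℕ) : Prop :=
  p ∉ μ ∧ ∃ ν : YoungDiagram, ν.cells = insert p μ.cells

/-- A box is removable if deleting it yields a Young diagram. -/
def IsRemovable (μ : YoungDiagram) (p : ℕ × ℕ) : Prop :=
  p ∈ μ ∧ ∃ ν : YoungDiagram, ν.cells = μ.cells.erase p

/-- The arm sequence `A^H_t = ⌈n t / 2⌉ - 1`. -/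
def AH (n : ℕ) (t : ℤ) : ℤ := ⌈((n : ℚ) * (t : ℚ)) / 2⌉ - 1

/-- The arm length of a box in a Young diagram. -/
def armLen (μ : YoungDiagram) (p : ℕ × ℕ) : ℤ := (μ.rowLen p.1 : ℤ) - (p.2 : ℤ) - 1

/-- The hook length of a box in a Young diagram. -/
def hookLen (μ : YoungDiagram) (p : ℕ × ℕ) : ℤ :=
  (μ.rowLen p.1 : ℤ) - (p.2 : ℤ) + (μ.colLen p.2 : ℤ) - (p.1 : ℤ) - 1

/-- A box of `μ` is `A^H`-illegal if `hook = n t` and `arm = A^H_t` for some `t ≥ 1`. -/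
def IllegalAH (n : ℕ) (μ : YoungDiagram) (p : ℕ × ℕ) : Prop :=
  p ∈ μ ∧ ∃ t : ℤ, 1 ≤ t ∧ hookLen μ p = (n : ℤ) * t ∧ armLen μ p = AH n t

/-- A partition is `A^H`-regular if it has no `A^H`-illegal boxes. -/
def RegularAH (n : ℕ) (μ : YoungDiagram) : Prop := ∀ p, ¬ IllegalAH n μ p

/-- The order `≻_{A^H}` on boxes whose contents are congruent mod `n` (and distinct):
`b' ≻ b` iff (for `c(b') - c(b) = n t`, `t > 0`) `y_{b'} - y_b > A^H_t`, and
(for `c(b) - c(b') = n t`, `t > 0`) the negation of the corresponding condition. -/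
def SuccAH (n : ℕ) (b' b : ℕ × ℕ) : Prop :=
  (∃ t : ℤ, 0 < t ∧ content b' - content b = (n : ℤ) * t ∧ (b'.2 : ℤ) - (b.2 : ℤ) > AH n t) ∨
  (∃ t : ℤ, 0 < t ∧ content b - content b' = (n : ℤ) * t ∧ ¬ ((b.2 : ℤ) - (b'.2 : ℤ) > AH n t))

open Classical in
/-- The finite set of addable boxes of a Young diagram. -/
noncomputable def addables (μ : YoungDiagram) : Finset (ℕ × ℕ) :=
  ((Finset.range (μ.colLen 0 + 1)) ×ˢ (Finset.range (μ.rowLen 0 + 1))).filter (IsAddable μ)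

open Classical in
/-- The finite set of removable boxes of a Young diagram. -/
noncomputable def removables (μ : YoungDiagram) : Finset (ℕ × ℕ) :=
  μ.cells.filter (IsRemovable μ)

/-- Addable boxes of color `i`. -/
noncomputable def addablesC (n : ℕ) (i : ZMod n) (μ : YoungDiagram) : Finset (ℕ × ℕ) :=
  (addables μ).filter (fun b => ((content b : ZMod n) = i))

/-- Removable boxes of color `i`. -/
noncomputable def removablesC (n : ℕ) (i : ZMod n) (μ : YoungDiagram) : Finset (ℕ × ℕ) :=
  (removables μ).filter (fun b => ((content b : ZMod n) = i))

lemma AH_bounds (n : ℕ) (t : ℤ) :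
    2 * AH n t + 1 ≤ (n : ℤ) * t ∧ (n : ℤ) * t ≤ 2 * AH n t + 2 := by
  have h1 := Int.le_ceil ((n : ℚ) * (t : ℚ) / 2)
  have h2 := Int.ceil_lt_add_one ((n : ℚ) * (t : ℚ) / 2)
  set c := ⌈(n : ℚ) * (t : ℚ) / 2⌉ with hc
  have e1 : (n : ℤ) * t ≤ 2 * c := by
    have : (((n : ℤ) * t : ℤ) : ℚ) ≤ ((2 * c : ℤ) : ℚ) := by push_cast; linarith
    exact_mod_cast this
  have e2 : 2 * c < (n : ℤ) * t + 2 := by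
    have : ((2 * c : ℤ) : ℚ) < (((n : ℤ) * t + 2 : ℤ) : ℚ) := by push_cast; linarith
    exact_mod_cast this
  have e2' := Int.lt_iff_add_one_le.mp e2
  unfold AH
  rw [← hc]
  constructor <;> linarith

lemma isAddable_len {μ : YoungDiagram} {p : ℕ × ℕ} (h : IsAddable μ p) :
    μ.rowLen p.1 = p.2 ∧ μ.colLen p.2 = p.1 := by
  obtain ⟨hnm, ν, hν⟩ := h
  have hmem : ∀ q : ℕ × ℕ, q ∈ ν ↔ q = p ∨ q ∈ μ := fun q => by
    rw [← YoungDiagram.mem_cells, hν, Finset.mem_insert, YoungDiagram.mem_cells]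
  have hpν : p ∈ ν := (hmem p).mpr (Or.inl rfl)
  constructor
  · refine le_antisymm ?_ ?_
    · by_contra hcon
      push_neg at hcon
      exact hnm (YoungDiagram.mem_iff_lt_rowLen.mpr hcon)
    · rcases Nat.eq_zero_or_pos p.2 with h0 | h0
      · omega
      · have h1 : (p.1, p.2 - 1) ∈ ν := ν.up_left_mem le_rfl (by omega) hpν
        have h2 : (p.1, p.2 - 1) ∈ μ := by
          rcases (hmem _).mp h1 with he | hμ
          · exfalso
            have := congrArg Prod.snd he
            simp only at this
            omega
          · exact hμ
        have := YoungDiagram.mem_iff_lt_rowLen.mp h2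
        omega
  · refine le_antisymm ?_ ?_
    · by_contra hcon
      push_neg at hcon
      exact hnm (YoungDiagram.mem_iff_lt_colLen.mpr hcon)
    · rcases Nat.eq_zero_or_pos p.1 with h0 | h0
      · omega
      · have h1 : (p.1 - 1, p.2) ∈ ν := ν.up_left_mem (by omega) le_rfl hpν
        have h2 : (p.1 - 1, p.2) ∈ μ := by
          rcases (hmem _).mp h1 with he | hμ
          · exfalso
            have := congrArg Prod.fst he
            simp only at this
            omega
          · exact hμ
        have := YoungDiagram.mem_iff_lt_colLen.mp h2
        omega

lemma isRemovable_len {μ : YoungDiagram} {p : ℕ × ℕ} (h : IsRemovable μ p) :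
    μ.rowLen p.1 = p.2 + 1 ∧ μ.colLen p.2 = p.1 + 1 := by
  obtain ⟨hm, ν, hν⟩ := h
  have hmem : ∀ q : ℕ × ℕ, q ∈ ν ↔ q ∈ μ ∧ q ≠ p := fun q => by
    rw [← YoungDiagram.mem_cells, hν, Finset.mem_erase, YoungDiagram.mem_cells, and_comm]
  have hr := YoungDiagram.mem_iff_lt_rowLen.mp hm
  have hcc := YoungDiagram.mem_iff_lt_colLen.mp hm
  constructor
  · have hnr : (p.1, p.2 + 1) ∉ μ := by
      intro hcon
      have h1 : (p.1, p.2 + 1) ∈ ν := (hmem _).mpr ⟨hcon, by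
        intro he
        have := congrArg Prod.snd he
        simp only at this
        omega⟩
      have h2 : (p.1, p.2) ∈ ν := ν.up_left_mem le_rfl (by omega) h1
      exact ((hmem _).mp h2).2 rfl
    have h4 : ¬ (p.2 + 1 < μ.rowLen p.1) := fun hlt => hnr (YoungDiagram.mem_iff_lt_rowLen.mpr hlt)
    omega
  · have hnc : (p.1 + 1, p.2) ∉ μ := by
      intro hcon
      have h1 : (p.1 + 1, p.2) ∈ ν := (hmem _).mpr ⟨hcon, by
        intro he
        have := congrArg Prod.fst he
        simp only at this
        omega⟩
      have h2 : (p.1, p.2) ∈ ν := ν.up_left_mem (by omega) le_rfl h1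
      exact ((hmem _).mp h2).2 rfl
    have h4 : ¬ (p.1 + 1 < μ.colLen p.2) := fun hlt => hnc (YoungDiagram.mem_iff_lt_colLen.mpr hlt)
    omega

/-- Key lemma 1: addable `a`, removable `r`, `c(r) - c(a) = n t > 0`. -/
lemma key1 {n : ℕ} {μ : YoungDiagram} (hn : 0 < n) (hreg : RegularAH n μ) {a r : ℕ × ℕ}
    (ha : IsAddable μ a) (hr : IsRemovable μ r) {t : ℤ} (ht : 0 < t)
    (hm : content r - content a = (n : ℤ) * t) :
    ((r.2 : ℤ) - (a.2 : ℤ)) ≠ AH n t := by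
  obtain ⟨hra, hca⟩ := isAddable_len ha
  obtain ⟨hrr, hcr⟩ := isRemovable_len hr
  have hnt : (0 : ℤ) < (n : ℤ) * t := mul_pos (by exact_mod_cast hn) ht
  simp only [content] at hm
  have hja : a.2 ≤ r.2 := by
    by_contra hcon
    push_neg at hcon
    have h1 : μ.colLen a.2 ≤ μ.colLen (r.2 + 1) := μ.colLen_anti _ _ (by omega)
    have h2 : μ.colLen (r.2 + 1) ≤ r.1 := by
      by_contra h2
      push_neg at h2
      have : (r.1, r.2 + 1) ∈ μ := YoungDiagram.mem_iff_lt_colLen.mpr h2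
      rw [YoungDiagram.mem_iff_lt_rowLen, hrr] at this
      omega
    have h3 : a.1 ≤ r.1 := by omega
    have c1 : (r.2 : ℤ) < a.2 := by exact_mod_cast hcon
    have c2 : (a.1 : ℤ) ≤ r.1 := by exact_mod_cast h3
    linarith
  intro heq
  apply hreg (r.1, a.2)
  refine ⟨?_, t, by omega, ?_, ?_⟩
  · rw [YoungDiagram.mem_iff_lt_rowLen, hrr]; omega
  · simp only [hookLen, hrr, hca]
    push_cast
    linarith
  · simp only [armLen, hrr]
    push_cast
    linarith

/-- Key lemma 2: addable `a`, removable `r`, `c(a) - c(r) = n t > 0`. -/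
lemma key2 {n : ℕ} {μ : YoungDiagram} (hn : 0 < n) (hreg : RegularAH n μ) {a r : ℕ × ℕ}
    (ha : IsAddable μ a) (hr : IsRemovable μ r) {t : ℤ} (ht : 0 < t)
    (hm : content a - content r = (n : ℤ) * t) :
    ((a.2 : ℤ) - (r.2 : ℤ)) ≠ AH n t + 1 := by
  obtain ⟨hra, hca⟩ := isAddable_len ha
  obtain ⟨hrr, hcr⟩ := isRemovable_len hr
  have hnt : (0 : ℤ) < (n : ℤ) * t := mul_pos (by exact_mod_cast hn) ht
  simp only [content] at hm
  have hjr : r.2 < a.2 := by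
    by_contra hcon
    push_neg at hcon
    have h1 : μ.colLen r.2 ≤ μ.colLen a.2 := μ.colLen_anti _ _ hcon
    have h2 : r.1 + 1 ≤ a.1 := by omega
    have c1 : (a.2 : ℤ) ≤ r.2 := by exact_mod_cast hcon
    have c2 : (r.1 : ℤ) + 1 ≤ a.1 := by exact_mod_cast h2
    linarith
  intro heq
  apply hreg (a.1, r.2)
  refine ⟨?_, t, by omega, ?_, ?_⟩
  · rw [YoungDiagram.mem_iff_lt_rowLen, hra]; omega
  · simp only [hookLen, hra, hcr]
    push_cast
    linarith
  · simp only [armLen, hra]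
    push_cast
    linarith

lemma succAH_height_le {n : ℕ} {u v : ℕ × ℕ} (h : SuccAH n u v) : height v ≤ height u := by
  rcases h with ⟨t, ht, hc, hy⟩ | ⟨t, ht, hc, hy⟩
  · have hb := AH_bounds n t
    have hy' := Int.lt_iff_add_one_le.mp hy
    simp only [content, height] at *
    linarith
  · have hb := AH_bounds n t
    push_neg at hy
    simp only [content, height] at *
    linarith

lemma succAH_content_ne {n : ℕ} (hn : 0 < n) {u v : ℕ × ℕ} (h : SuccAH n u v) :
    content u ≠ content v := by
  have hn' : (0 : ℤ) < (n : ℤ) := by exact_mod_cast hn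
  rcases h with ⟨t, ht, hc, -⟩ | ⟨t, ht, hc, -⟩ <;> intro he <;> rw [he] at hc <;>
    
    nlinarith [mul_pos hn' ht]

/-- For an `A^H`-regular partition, an addable box `b` and a removable box `b'` of the same
color with `h(b) - 1 = h(b') + 1`: any addable box `c` of the same color with
`b ≻ c ≻ b'` has `h(c) = h(b)`, and any removable box `c` of the same color with
`b ≻ c ≻ b'` has `h(c) = h(b')`. -/
theorem between_heights (n : ℕ) (hn : 3 ≤ n) (μ : YoungDiagram)
    (hreg : RegularAH n μ) (b b' : ℕ × ℕ)
    (hb : IsAddable μ b) (hb' : IsRemovable μ b')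
    (hcong : (n : ℤ) ∣ (content b - content b'))
    (hgap : height b - 1 = height b' + 1) :
    (∀ c : ℕ × ℕ, IsAddable μ c → (n : ℤ) ∣ (content c - content b) →
      SuccAH n b c → SuccAH n c b' → height c = height b) ∧
    (∀ c : ℕ × ℕ, IsRemovable μ c → (n : ℤ) ∣ (content c - content b) →
      SuccAH n b c → SuccAH n c b' → height c = height b') := by
  have hn0 : 0 < n := by omega
  have hn0' : (0 : ℤ) < (n : ℤ) := by exact_mod_cast hn0
  constructor
  · intro c hc hdvd hbc hcb'
    have hcle : height c ≤ height b := succAH_height_le hbc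
    rcases lt_trichotomy (content c) (content b') with hlt | heq | hgt
    · -- impossible: c would be too high
      exfalso
      rcases hcb' with ⟨t, ht, hceq, hy⟩ | ⟨t, ht, hceq, hy⟩
      · nlinarith [mul_pos hn0' ht]
      · push_neg at hy
        have hkey := key1 hn0 hreg hc hb' ht hceq
        have hAb := AH_bounds n t
        have hy' : (b'.2 : ℤ) - (c.2 : ℤ) + 1 ≤ AH n t :=
          Int.lt_iff_add_one_le.mp (lt_of_le_of_ne hy hkey)
        simp only [content, height] at hceq hgap hcle ⊢
        linarith
    · exact absurd heq (succAH_content_ne hn0 hcb')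
    · rcases hcb' with ⟨t, ht, hceq, hy⟩ | ⟨t, ht, hceq, hy⟩
      · have hkey := key2 hn0 hreg hc hb' ht hceq
        have hAb := AH_bounds n t
        have hy1 : AH n t + 1 ≤ (c.2 : ℤ) - (b'.2 : ℤ) := Int.lt_iff_add_one_le.mp hy
        have hy2 : AH n t + 1 + 1 ≤ (c.2 : ℤ) - (b'.2 : ℤ) :=
          Int.lt_iff_add_one_le.mp (lt_of_le_of_ne hy1 (Ne.symm hkey))
        simp only [content, height] at hceq hgap hcle ⊢
        linarith
      · exfalso; nlinarith [mul_pos hn0' ht]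
  · intro c hc hdvd hbc hcb'
    have hcge : height b' ≤ height c := succAH_height_le hcb'
    rcases lt_trichotomy (content c) (content b) with hlt | heq | hgt
    · rcases hbc with ⟨t, ht, hceq, hy⟩ | ⟨t, ht, hceq, hy⟩
      · have hkey := key2 hn0 hreg hb hc ht hceq
        have hAb := AH_bounds n t
        have hy1 : AH n t + 1 ≤ (b.2 : ℤ) - (c.2 : ℤ) := Int.lt_iff_add_one_le.mp hy
        have hy2 : AH n t + 1 + 1 ≤ (b.2 : ℤ) - (c.2 : ℤ) :=
          Int.lt_iff_add_one_le.mp (lt_of_le_of_ne hy1 (Ne.symm hkey))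
        simp only [content, height] at hceq hgap hcge ⊢
        linarith
      · exfalso; nlinarith [mul_pos hn0' ht]
    · exact absurd heq.symm (succAH_content_ne hn0 hbc)
    · exfalso
      rcases hbc with ⟨t, ht, hceq, hy⟩ | ⟨t, ht, hceq, hy⟩
      · nlinarith [mul_pos hn0' ht]
      · push_neg at hy
        have hkey := key1 hn0 hreg hb hc ht hceq
        have hAb := AH_bounds n t
        have hy' : (c.2 : ℤ) - (b.2 : ℤ) + 1 ≤ AH n t :=
          Int.lt_iff_add_one_le.mp (lt_of_le_of_ne hy hkey)
        simp only [content, height] at hceq hgap hcge ⊢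
        linarith
end

section
/- Let μ = λ ⊔ b for a box b of color ī. Then exactly one of the following holds: there is a box b' of color ī+1 with h(b') = h(b)+1 such that A_{ī+1}(μ) = A_{ī+1}(λ) ∪ {b'} and R_{ī+1}(μ) = R_{ī+1}(λ); or there is a box b' of color ī+1 with h(b') = h(b)-1 such that R_{ī+1}(λ) = R_{ī+1}(μ) ∪ {b'} and A_{ī+1}(λ) = A_{ī+1}(μ). -/
lemma pair_mem_iff {mu : YoungDiagram} {q : ℕ × ℕ} : q ∈ mu ↔ (q.1, q.2) ∈ mu := by
  cases q; rfl

lemma isAddable_iff (mu : YoungDiagram) (p : ℕ × ℕ) :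
    IsAddable mu p ↔ p ∉ mu ∧ (∀ i, p.1 = i + 1 → (i, p.2) ∈ mu) ∧
      (∀ j, p.2 = j + 1 → (p.1, j) ∈ mu) := by
  constructor
  · rintro ⟨hnp, ν, hν⟩
    have hpν : p ∈ ν := by
      rw [← YoungDiagram.mem_cells, hν]; exact Finset.mem_insert_self _ _
    refine ⟨hnp, ?_, ?_⟩
    · intro i hi
      have h1 : (i, p.2) ∈ ν := ν.up_left_mem (by omega) le_rfl (pair_mem_iff.mp hpν)
      rw [← YoungDiagram.mem_cells, hν, Finset.mem_insert] at h1
      rcases h1 with h1 | h1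
      · exfalso; have := congrArg Prod.fst h1; simp at this; omega
      · exact (YoungDiagram.mem_cells _).mp h1
    · intro j hj
      have h1 : (p.1, j) ∈ ν := ν.up_left_mem le_rfl (by omega) (pair_mem_iff.mp hpν)
      rw [← YoungDiagram.mem_cells, hν, Finset.mem_insert] at h1
      rcases h1 with h1 | h1
      · exfalso; have := congrArg Prod.snd h1; simp at this; omega
      · exact (YoungDiagram.mem_cells _).mp h1
  · rintro ⟨hnp, h1, h2⟩
    refine ⟨hnp, ⟨insert p mu.cells, ?_⟩, rfl⟩
    intro a q hle ha
    simp only [Finset.coe_insert, Set.mem_insert_iff, Finset.mem_coe,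
      YoungDiagram.mem_cells] at ha ⊢
    rcases ha with rfl | ha
    · rcases Nat.lt_or_ge q.1 a.1 with h | h
      · have hm : (a.1 - 1, a.2) ∈ mu := h1 (a.1 - 1) (by omega)
        right
        exact pair_mem_iff.mpr (mu.up_left_mem (by omega) hle.2 hm)
      · rcases Nat.lt_or_ge q.2 a.2 with h' | h'
        · have hm : (a.1, a.2 - 1) ∈ mu := h2 (a.2 - 1) (by omega)
          right
          exact pair_mem_iff.mpr (mu.up_left_mem hle.1 (by omega) hm)
        · left
          exact Prod.ext (le_antisymm hle.1 h) (le_antisymm hle.2 h')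
    · exact Or.inr (mu.isLowerSet hle ha)

lemma isRemovable_iff (mu : YoungDiagram) (p : ℕ × ℕ) :
    IsRemovable mu p ↔ p ∈ mu ∧ (p.1 + 1, p.2) ∉ mu ∧ (p.1, p.2 + 1) ∉ mu := by
  constructor
  · rintro ⟨hp, ν, hν⟩
    have key : ∀ q : ℕ × ℕ, q ∈ mu → q ≠ p → p ≤ q → False := by
      intro q hq hqp hpq
      have h1 : q ∈ ν := by
        rw [← YoungDiagram.mem_cells, hν, Finset.mem_erase]
        exact ⟨hqp, (YoungDiagram.mem_cells _).mpr hq⟩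
      have h2 : p ∈ ν := ν.isLowerSet hpq h1
      rw [← YoungDiagram.mem_cells, hν, Finset.mem_erase] at h2
      exact h2.1 rfl
    refine ⟨hp, ?_, ?_⟩
    · intro h
      refine key _ h (by intro he; have := congrArg Prod.fst he; simp at this) ?_
      exact Prod.mk_le_mk.mpr ⟨Nat.le_succ _, le_rfl⟩
    · intro h
      refine key _ h (by intro he; have := congrArg Prod.snd he; simp at this) ?_
      exact Prod.mk_le_mk.mpr ⟨le_rfl, Nat.le_succ _⟩
  · rintro ⟨hp, h1, h2⟩
    refine ⟨hp, ⟨mu.cells.erase p, ?_⟩, rfl⟩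
    intro a q hle ha
    simp only [Finset.coe_erase, Set.mem_diff, Finset.mem_coe, YoungDiagram.mem_cells,
      Set.mem_singleton_iff] at ha ⊢
    refine ⟨mu.isLowerSet hle ha.1, ?_⟩
    rintro rfl
    rcases Nat.lt_or_ge q.1 a.1 with h | h
    · exact h1 (pair_mem_iff.mpr (mu.up_left_mem (by omega) hle.2 (pair_mem_iff.mp ha.1)))
    · rcases Nat.lt_or_ge q.2 a.2 with h' | h'
      · exact h2 (pair_mem_iff.mpr (mu.up_left_mem hle.1 (by omega) (pair_mem_iff.mp ha.1)))
      · exact ha.2 (Prod.ext (le_antisymm h hle.1) (le_antisymm h' hle.2))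

lemma mem_addables {mu : YoungDiagram} {q : ℕ × ℕ} : q ∈ addables mu ↔ IsAddable mu q := by
  classical
  rw [addables, Finset.mem_filter]
  constructor
  · exact fun h => h.2
  · intro h
    refine ⟨?_, h⟩
    rw [Finset.mem_product, Finset.mem_range, Finset.mem_range]
    rw [isAddable_iff] at h
    obtain ⟨-, h1, h2⟩ := h
    constructor
    · rcases Nat.eq_zero_or_pos q.1 with h0 | h0
      · omega
      · have hm := h1 (q.1 - 1) (by omega)
        have hm2 : (q.1 - 1, 0) ∈ mu := mu.up_left_mem le_rfl (Nat.zero_le _) hm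
        rw [YoungDiagram.mem_iff_lt_colLen] at hm2
        omega
    · rcases Nat.eq_zero_or_pos q.2 with h0 | h0
      · omega
      · have hm := h2 (q.2 - 1) (by omega)
        have hm2 : (0, q.2 - 1) ∈ mu := mu.up_left_mem (Nat.zero_le _) le_rfl hm
        rw [YoungDiagram.mem_iff_lt_rowLen] at hm2
        omega

lemma mem_removables {mu : YoungDiagram} {q : ℕ × ℕ} : q ∈ removables mu ↔ IsRemovable mu q := by
  classical
  rw [removables, Finset.mem_filter]
  exact ⟨fun h => h.2, fun h => ⟨(YoungDiagram.mem_cells _).mpr h.1, h⟩⟩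

lemma mem_addablesC {n : ℕ} {i : ZMod n} {mu : YoungDiagram} {q : ℕ × ℕ} :
    q ∈ addablesC n i mu ↔ IsAddable mu q ∧ (content q : ZMod n) = i := by
  classical
  rw [addablesC, Finset.mem_filter, mem_addables]

lemma mem_removablesC {n : ℕ} {i : ZMod n} {mu : YoungDiagram} {q : ℕ × ℕ} :
    q ∈ removablesC n i mu ↔ IsRemovable mu q ∧ (content q : ZMod n) = i := by
  classical
  rw [removablesC, Finset.mem_filter, mem_removables]

/-- If `μ = λ ⊔ b` with `b` of color `ī`, then exactly one of the following holds: either there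
is a box `b'` of color `ī+1` with `h(b') = h(b) + 1` such that
`A_{ī+1}(μ) = A_{ī+1}(λ) ∪ {b'}` (with `b' ∉ A_{ī+1}(λ)`) and `R_{ī+1}(μ) = R_{ī+1}(λ)`,
or there is a box `b'` of color `ī+1` with `h(b') = h(b) - 1` such that
`R_{ī+1}(λ) = R_{ī+1}(μ) ∪ {b'}` (with `b' ∉ R_{ī+1}(μ)`) and `A_{ī+1}(λ) = A_{ī+1}(μ)`. -/
theorem addable_removable_change (n : ℕ) (hn : 3 ≤ n) (lam mu : YoungDiagram) (b : ℕ × ℕ)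
    (hb : IsAddable lam b) (hmu : mu.cells = insert b lam.cells) :
    Xor'
      (∃ b' : ℕ × ℕ, (content b' : ZMod n) = (content b : ZMod n) + 1 ∧
        height b' = height b + 1 ∧
        b' ∉ addablesC n ((content b : ZMod n) + 1) lam ∧
        addablesC n ((content b : ZMod n) + 1) mu
          = insert b' (addablesC n ((content b : ZMod n) + 1) lam) ∧
        removablesC n ((content b : ZMod n) + 1) mu
          = removablesC n ((content b : ZMod n) + 1) lam)
      (∃ b' : ℕ × ℕ, (content b' : ZMod n) = (content b : ZMod n) + 1 ∧
        height b' = height b - 1 ∧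
        b' ∉ removablesC n ((content b : ZMod n) + 1) mu ∧
        removablesC n ((content b : ZMod n) + 1) lam
          = insert b' (removablesC n ((content b : ZMod n) + 1) mu) ∧
        addablesC n ((content b : ZMod n) + 1) lam
          = addablesC n ((content b : ZMod n) + 1) mu) := by
  classical
  haveI : NeZero n := ⟨by omega⟩
  haveI : Fact (1 < n) := ⟨by omega⟩
  have h1ne : (1 : ZMod n) ≠ 0 := one_ne_zero
  have h2ne : (2 : ZMod n) ≠ 0 := by
    intro h
    have h2 : ((2 : ℕ) : ZMod n) = 0 := by exact_mod_cast h
    rw [ZMod.natCast_eq_zero_iff] at h2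
    have := Nat.le_of_dvd (by norm_num) h2
    omega
  obtain ⟨bi, bj⟩ := b
  have hmem : ∀ q : ℕ × ℕ, q ∈ mu ↔ q = (bi, bj) ∨ q ∈ lam := by
    intro q
    rw [← YoungDiagram.mem_cells, hmu, Finset.mem_insert, YoungDiagram.mem_cells]
  have hsub : ∀ q : ℕ × ℕ, q ∈ lam → q ∈ mu := fun q hq => (hmem q).mpr (Or.inr hq)
  rw [isAddable_iff] at hb
  obtain ⟨hbn, hbrow, hbcol⟩ := hb
  have hbmu : (bi, bj) ∈ mu := (hmem _).mpr (Or.inl rfl)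
  have hcolne : ∀ q : ℕ × ℕ,
      (content q : ZMod n) = (content (bi, bj) : ZMod n) + 1 → q ≠ (bi, bj) := by
    rintro q hq rfl
    exact h1ne (by linear_combination -hq)
  have key2 : ∀ q : ℕ × ℕ, content q = content (bi, bj) - 1 →
      (content q : ZMod n) ≠ (content (bi, bj) : ZMod n) + 1 := by
    intro q h hq
    rw [h] at hq
    push_cast at hq
    exact h2ne (by linear_combination -hq)
  by_cases hC : ∀ i0, bi = i0 + 1 → (i0, bj + 1) ∈ lam
  · -- Case 1: the box to the right of b becomes addable
    have hcb'1 : (content (bi, bj + 1) : ZMod n) = (content (bi, bj) : ZMod n) + 1 := by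
      have h' : content (bi, bj + 1) = content (bi, bj) + 1 := by
        simp only [content]; push_cast; ring
      rw [h']; push_cast; ring
    have hh1 : height (bi, bj + 1) = height (bi, bj) + 1 := by
      simp only [height]; push_cast; ring
    have hnotin : (bi, bj + 1) ∉ addablesC n ((content (bi, bj) : ZMod n) + 1) lam := by
      intro h
      rw [mem_addablesC, isAddable_iff] at h
      exact hbn (h.1.2.2 bj rfl)
    have hins : addablesC n ((content (bi, bj) : ZMod n) + 1) mu
        = insert (bi, bj + 1) (addablesC n ((content (bi, bj) : ZMod n) + 1) lam) := by
      ext q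
      simp only [mem_addablesC, Finset.mem_insert, isAddable_iff]
      constructor
      · rintro ⟨⟨hq1, hq2, hq3⟩, hcq⟩
        by_cases hqb' : q = (bi, bj + 1)
        · exact Or.inl hqb'
        · right
          refine ⟨⟨fun h => hq1 (hsub q h), ?_, ?_⟩, hcq⟩
          · intro i hi
            rcases (hmem _).mp (hq2 i hi) with he | h
            · exfalso
              rw [Prod.mk.injEq] at he
              obtain ⟨e1, e2⟩ := he
              have hcontent : content q = content (bi, bj) - 1 := by
                simp only [content]; rw [hi, e1, e2]; push_cast; ring
              exact key2 q hcontent hcq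
            · exact h
          · intro j hj
            rcases (hmem _).mp (hq3 j hj) with he | h
            · exfalso
              rw [Prod.mk.injEq] at he
              obtain ⟨e1, e2⟩ := he
              exact hqb' (Prod.ext e1 (by omega))
            · exact h
      · rintro (rfl | ⟨⟨hq1, hq2, hq3⟩, hcq⟩)
        · refine ⟨⟨?_, ?_, ?_⟩, hcb'1⟩
          · intro h
            rcases (hmem _).mp h with he | h
            · rw [Prod.mk.injEq] at he; omega
            · exact hbn (lam.up_left_mem le_rfl (Nat.le_succ _) h)
          · intro i hi
            exact hsub _ (hC i hi)
          · intro j hj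
            have hj' : bj + 1 = j + 1 := hj
            have : j = bj := by omega
            rw [this]; exact hbmu
        · refine ⟨⟨?_, fun i hi => hsub _ (hq2 i hi), fun j hj => hsub _ (hq3 j hj)⟩, hcq⟩
          intro h
          rcases (hmem _).mp h with he | h
          · exact hcolne q hcq he
          · exact hq1 h
    have hrem : removablesC n ((content (bi, bj) : ZMod n) + 1) mu
        = removablesC n ((content (bi, bj) : ZMod n) + 1) lam := by
      ext q
      simp only [mem_removablesC, isRemovable_iff]
      constructor
      · rintro ⟨⟨hq1, hq2, hq3⟩, hcq⟩
        refine ⟨⟨?_, fun h => hq2 (hsub _ h), fun h => hq3 (hsub _ h)⟩, hcq⟩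
        rcases (hmem _).mp hq1 with he | h
        · exact absurd he (hcolne q hcq)
        · exact h
      · rintro ⟨⟨hq1, hq2, hq3⟩, hcq⟩
        refine ⟨⟨hsub _ hq1, ?_, ?_⟩, hcq⟩
        · intro h
          rcases (hmem _).mp h with he | h
          · rw [Prod.mk.injEq] at he
            obtain ⟨e1, e2⟩ := he
            apply hq3
            have h' := hC q.1 e1.symm
            rwa [← e2] at h'
          · exact hq2 h
        · intro h
          rcases (hmem _).mp h with he | h
          · rw [Prod.mk.injEq] at he
            obtain ⟨e1, e2⟩ := he
            have hcontent : content q = content (bi, bj) - 1 := by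
              simp only [content]; rw [e1, ← e2]; push_cast; ring
            exact key2 q hcontent hcq
          · exact hq3 h
    refine Or.inl ⟨⟨(bi, bj + 1), hcb'1, hh1, hnotin, hins, hrem⟩, ?_⟩
    rintro ⟨b2, -, -, -, -, hA⟩
    have : (bi, bj + 1) ∈ addablesC n ((content (bi, bj) : ZMod n) + 1) lam := by
      rw [hA, hins]; exact Finset.mem_insert_self _ _
    exact hnotin this
  · -- Case 2: the box above b stops being removable
    push_neg at hC
    obtain ⟨i0, hbi, hno⟩ := hC
    have hb'lam : (i0, bj) ∈ lam := hbrow i0 hbi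
    have hcb'2 : (content (i0, bj) : ZMod n) = (content (bi, bj) : ZMod n) + 1 := by
      have h' : content (i0, bj) = content (bi, bj) + 1 := by
        simp only [content]; rw [hbi]; push_cast; ring
      rw [h']; push_cast; ring
    have hh2 : height (i0, bj) = height (bi, bj) - 1 := by
      simp only [height]; rw [hbi]; push_cast; ring
    have hnotin : (i0, bj) ∉ removablesC n ((content (bi, bj) : ZMod n) + 1) mu := by
      intro h
      rw [mem_removablesC, isRemovable_iff] at h
      exact h.1.2.1 (hbi ▸ hbmu)
    have hins : removablesC n ((content (bi, bj) : ZMod n) + 1) lam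
        = insert (i0, bj) (removablesC n ((content (bi, bj) : ZMod n) + 1) mu) := by
      ext q
      simp only [mem_removablesC, Finset.mem_insert, isRemovable_iff]
      constructor
      · rintro ⟨⟨hq1, hq2, hq3⟩, hcq⟩
        by_cases hqb' : q = (i0, bj)
        · exact Or.inl hqb'
        · right
          refine ⟨⟨hsub _ hq1, ?_, ?_⟩, hcq⟩
          · intro h
            rcases (hmem _).mp h with he | h
            · rw [Prod.mk.injEq] at he
              obtain ⟨e1, e2⟩ := he
              exact hqb' (Prod.ext (by omega) e2)
            · exact hq2 h
          · intro h
            rcases (hmem _).mp h with he | h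
            · rw [Prod.mk.injEq] at he
              obtain ⟨e1, e2⟩ := he
              have hcontent : content q = content (bi, bj) - 1 := by
                simp only [content]; rw [e1, ← e2]; push_cast; ring
              exact key2 q hcontent hcq
            · exact hq3 h
      · rintro (rfl | ⟨⟨hq1, hq2, hq3⟩, hcq⟩)
        · refine ⟨⟨hb'lam, ?_, hno⟩, hcb'2⟩
          exact hbi ▸ hbn
        · refine ⟨⟨?_, fun h => hq2 (hsub _ h), fun h => hq3 (hsub _ h)⟩, hcq⟩
          rcases (hmem _).mp hq1 with he | h
          · exact absurd he (hcolne q hcq)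
          · exact h
    have hadd : addablesC n ((content (bi, bj) : ZMod n) + 1) lam
        = addablesC n ((content (bi, bj) : ZMod n) + 1) mu := by
      ext q
      simp only [mem_addablesC, isAddable_iff]
      constructor
      · rintro ⟨⟨hq1, hq2, hq3⟩, hcq⟩
        refine ⟨⟨?_, fun i hi => hsub _ (hq2 i hi), fun j hj => hsub _ (hq3 j hj)⟩, hcq⟩
        intro h
        rcases (hmem _).mp h with he | h
        · exact hcolne q hcq he
        · exact hq1 h
      · rintro ⟨⟨hq1, hq2, hq3⟩, hcq⟩
        refine ⟨⟨fun h => hq1 (hsub _ h), ?_, ?_⟩, hcq⟩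
        · intro i hi
          rcases (hmem _).mp (hq2 i hi) with he | h
          · exfalso
            rw [Prod.mk.injEq] at he
            obtain ⟨e1, e2⟩ := he
            have hcontent : content q = content (bi, bj) - 1 := by
              simp only [content]; rw [hi, e1, e2]; push_cast; ring
            exact key2 q hcontent hcq
          · exact h
        · intro j hj
          rcases (hmem _).mp (hq3 j hj) with he | h
          · exfalso
            rw [Prod.mk.injEq] at he
            obtain ⟨e1, e2⟩ := he
            have h' := hq2 i0 (by omega)
            rcases (hmem _).mp h' with he2 | h2
            · rw [Prod.mk.injEq] at he2; omega
            · apply hno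
              have e3 : q.2 = bj + 1 := by omega
              rwa [e3] at h2
          · exact h
    refine Or.inr ⟨⟨(i0, bj), hcb'2, hh2, hnotin, hins, hadd⟩, ?_⟩
    rintro ⟨b1, -, -, hnotin1, hins1, -⟩
    have : b1 ∈ addablesC n ((content (bi, bj) : ZMod n) + 1) lam := by
      rw [hadd, hins1]; exact Finset.mem_insert_self _ _
    exact hnotin1 this
end
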